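/- Let a_1, a_2, a_3 be integers and let (s_n) be defined by s_0 = 3, s_1 = -a_1, s_2 = a_1^2 - 2a_2, and s_{n+3} + a_1 s_{n+2} + a_2 s_{n+1} + a_3 s_n = 0 for n ≥ 0. Let f(x) = x^3 + a_1 x^2 + a_2 x + a_3 and let p be a prime not dividing 6·disc(f)·(a_1^2 - 3a_2). Then: N_p(f) = 3 if and only if s_{p+1} ≡ a_1^2 - 2a_2 (mod p); N_p(f) = 0 if and only if s_{p+1} ≡ a_2 (mod p); and otherwise N_p(f) = 1. -/

import Mathlib

open Polynomial Finset

private lemma fcard3 {K : Type*} [Field K] [DecidableEq K] (q : K → Prop) [DecidablePred q]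
    {α β γ : K} (hab : α ≠ β) (hag : α ≠ γ) (hbg : β ≠ γ)
    (ha : q α) (hb : q β) (hc : q γ) :
    (({α, β, γ} : Finset K).filter q).card = 3 := by
  rw [Finset.filter_true_of_mem (fun x hx => by
    simp only [Finset.mem_insert, Finset.mem_singleton] at hx
    rcases hx with rfl|rfl|rfl <;> assumption)]
  rw [Finset.card_insert_of_notMem (by simp [hab, hag]),
    Finset.card_insert_of_notMem (by simp [hbg]), Finset.card_singleton]

private lemma fcard1 {K : Type*} [Field K] [DecidableEq K] (q : K → Prop) [DecidablePred q]
    {α β γ : K}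
    (ha : q α) (hb : ¬ q β) (hc : ¬ q γ) :
    (({α, β, γ} : Finset K).filter q).card = 1 := by
  have h : ({α, β, γ} : Finset K).filter q = {α} := by
    ext x
    simp only [Finset.mem_filter, Finset.mem_insert, Finset.mem_singleton]
    constructor
    · rintro ⟨rfl|rfl|rfl, hq⟩
      · rfl
      · exact absurd hq hb
      · exact absurd hq hc
    · rintro rfl; exact ⟨Or.inl rfl, ha⟩
  rw [h, Finset.card_singleton]

private lemma fcard0 {K : Type*} [Field K] [DecidableEq K] (q : K → Prop) [DecidablePred q]
    {α β γ : K}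
    (ha : ¬ q α) (hb : ¬ q β) (hc : ¬ q γ) :
    (({α, β, γ} : Finset K).filter q).card = 0 := by
  rw [Finset.card_eq_zero, Finset.filter_eq_empty_iff]
  intro x hx
  simp only [Finset.mem_insert, Finset.mem_singleton] at hx
  rcases hx with rfl|rfl|rfl <;> assumption

private lemma aux3 (p : ℕ) (a1 a2 : ℤ) (S : ℤ) (N : ℕ) {K : Type*} [Field K] [CharP K p]
    (α β γ : K)
    (hE1 : α + β + γ = -(a1 : K)) (hE2 : α*β + β*γ + γ*α = (a2 : K))
    (hA : (a1 : K)^2 - 3*(a2 : K) ≠ 0)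
    (hN : N = 3) (hsv : ((S : ℤ) : K) = α^2 + β^2 + γ^2) :
    (N = 3 ↔ Int.ModEq (p : ℤ) S (a1 ^ 2 - 2 * a2)) ∧
    (N = 0 ↔ Int.ModEq (p : ℤ) S a2) ∧
    (¬ Int.ModEq (p : ℤ) S (a1 ^ 2 - 2 * a2) → ¬ Int.ModEq (p : ℤ) S a2 → N = 1) := by
  have ha1 : (a1 : K) = -(α + β + γ) := by linear_combination hE1
  have hmod1 : Int.ModEq (p : ℤ) S (a1 ^ 2 - 2 * a2) := by
    rw [← CharP.intCast_eq_intCast K p]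
    push_cast
    rw [hsv, ha1, ← hE2]
    ring
  have hmod2 : ¬ Int.ModEq (p : ℤ) S a2 := by
    intro h
    rw [← CharP.intCast_eq_intCast K p] at h
    push_cast at h
    rw [hsv] at h
    apply hA
    rw [← hE2] at h
    rw [ha1, ← hE2]
    linear_combination h
  exact ⟨⟨fun _ => hmod1, fun _ => hN⟩,
    ⟨fun h => absurd (hN.symm.trans h) (by norm_num), fun h => absurd h hmod2⟩,
    fun h _ => absurd hmod1 h⟩

private lemma aux0 (p : ℕ) (a1 a2 : ℤ) (S : ℤ) (N : ℕ) {K : Type*} [Field K] [CharP K p]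
    (α β γ : K)
    (hE1 : α + β + γ = -(a1 : K)) (hE2 : α*β + β*γ + γ*α = (a2 : K))
    (hA : (a1 : K)^2 - 3*(a2 : K) ≠ 0)
    (hN : N = 0) (hsv : ((S : ℤ) : K) = α*β + β*γ + γ*α) :
    (N = 3 ↔ Int.ModEq (p : ℤ) S (a1 ^ 2 - 2 * a2)) ∧
    (N = 0 ↔ Int.ModEq (p : ℤ) S a2) ∧
    (¬ Int.ModEq (p : ℤ) S (a1 ^ 2 - 2 * a2) → ¬ Int.ModEq (p : ℤ) S a2 → N = 1) := by
  have ha1 : (a1 : K) = -(α + β + γ) := by linear_combination hE1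
  have hmod2 : Int.ModEq (p : ℤ) S a2 := by
    rw [← CharP.intCast_eq_intCast K p]
    push_cast
    rw [hsv, hE2]
  have hmod1 : ¬ Int.ModEq (p : ℤ) S (a1 ^ 2 - 2 * a2) := by
    intro h
    rw [← CharP.intCast_eq_intCast K p] at h
    push_cast at h
    rw [hsv] at h
    apply hA
    rw [ha1, ← hE2] at h
    rw [ha1, ← hE2]
    linear_combination -h
  exact ⟨⟨fun h => absurd (hN.symm.trans h) (by norm_num), fun h => absurd h hmod1⟩,
    ⟨fun _ => hmod2, fun _ => hN⟩,
    fun _ h => absurd hmod2 h⟩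

private lemma aux1 (p : ℕ) (a1 a2 : ℤ) (S : ℤ) (N : ℕ) {K : Type*} [Field K] [CharP K p]
    (α β γ : K)
    (hE1 : α + β + γ = -(a1 : K)) (hE2 : α*β + β*γ + γ*α = (a2 : K))
    (hab : α ≠ β) (hag : α ≠ γ) (hbg : β ≠ γ)
    (hN : N = 1) (hsv : ((S : ℤ) : K) = α^2 + 2*β*γ) :
    (N = 3 ↔ Int.ModEq (p : ℤ) S (a1 ^ 2 - 2 * a2)) ∧
    (N = 0 ↔ Int.ModEq (p : ℤ) S a2) ∧
    (¬ Int.ModEq (p : ℤ) S (a1 ^ 2 - 2 * a2) → ¬ Int.ModEq (p : ℤ) S a2 → N = 1) := by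
  have ha1 : (a1 : K) = -(α + β + γ) := by linear_combination hE1
  have hmod1 : ¬ Int.ModEq (p : ℤ) S (a1 ^ 2 - 2 * a2) := by
    intro h
    rw [← CharP.intCast_eq_intCast K p] at h
    push_cast at h
    rw [hsv, ha1, ← hE2] at h
    have h' : (β - γ)^2 = 0 := by linear_combination -h
    exact hbg (sub_eq_zero.mp ((pow_eq_zero_iff (by norm_num : (2:ℕ) ≠ 0)).mp h'))
  have hmod2 : ¬ Int.ModEq (p : ℤ) S a2 := by
    intro h
    rw [← CharP.intCast_eq_intCast K p] at h
    push_cast at h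
    rw [hsv, ← hE2] at h
    have h' : (α - β) * (α - γ) = 0 := by linear_combination h
    rcases mul_eq_zero.mp h' with h''|h''
    · exact hab (sub_eq_zero.mp h'')
    · exact hag (sub_eq_zero.mp h'')
  exact ⟨⟨fun h => absurd (hN.symm.trans h) (by norm_num), fun h => absurd h hmod1⟩,
    ⟨fun h => absurd (hN.symm.trans h) (by norm_num), fun h => absurd h hmod2⟩,
    fun _ _ => hN⟩

private lemma fcard1' {K : Type*} [Field K] [DecidableEq K] (q : K → Prop) [DecidablePred q]
    {α β γ : K}
    (ha : ¬ q α) (hb : ¬ q β) (hc : q γ) :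
    (({α, β, γ} : Finset K).filter q).card = 1 := by
  have h : ({α, β, γ} : Finset K).filter q = {γ} := by
    ext x
    simp only [Finset.mem_filter, Finset.mem_insert, Finset.mem_singleton]
    constructor
    · rintro ⟨rfl|rfl|rfl, hq⟩
      · exact absurd hq ha
      · exact absurd hq hb
      · rfl
    · rintro rfl; exact ⟨Or.inr (Or.inr rfl), hc⟩
  rw [h, Finset.card_singleton]

private lemma fcard1'' {K : Type*} [Field K] [DecidableEq K] (q : K → Prop) [DecidablePred q]
    {α β γ : K}
    (ha : ¬ q α) (hb : q β) (hc : ¬ q γ) :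
    (({α, β, γ} : Finset K).filter q).card = 1 := by
  have h : ({α, β, γ} : Finset K).filter q = {β} := by
    ext x
    simp only [Finset.mem_filter, Finset.mem_insert, Finset.mem_singleton]
    constructor
    · rintro ⟨rfl|rfl|rfl, hq⟩
      · exact absurd hq ha
      · rfl
      · exact absurd hq hc
    · rintro rfl; exact ⟨Or.inr (Or.inl rfl), hb⟩
  rw [h, Finset.card_singleton]

private theorem sun_aux (p : ℕ) [Fact p.Prime] (K : Type) [Field K] [IsAlgClosed K] [CharP K p]
    (a1 a2 a3 : ℤ) (s : ℕ → ℤ)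
    (h0 : s 0 = 3) (h1 : s 1 = -a1) (h2 : s 2 = a1 ^ 2 - 2 * a2)
    (hrec : ∀ n, s (n + 3) + a1 * s (n + 2) + a2 * s (n + 1) + a3 * s n = 0)
    (hpe : ¬ ((p : ℤ) ∣ 6 * (18 * a1 * a2 * a3 - 4 * a1 ^ 3 * a3 + a1 ^ 2 * a2 ^ 2
      - 4 * a2 ^ 3 - 27 * a3 ^ 2) * (a1 ^ 2 - 3 * a2)))
    (N : ℕ)
    (hN : N = (Finset.univ.filter
      (fun x : ZMod p => x ^ 3 + (a1 : ZMod p) * x ^ 2 + (a2 : ZMod p) * x + (a3 : ZMod p) = 0)).card) :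
    (N = 3 ↔ Int.ModEq (p : ℤ) (s (p + 1)) (a1 ^ 2 - 2 * a2)) ∧
    (N = 0 ↔ Int.ModEq (p : ℤ) (s (p + 1)) a2) ∧
    (¬ Int.ModEq (p : ℤ) (s (p + 1)) (a1 ^ 2 - 2 * a2) →
      ¬ Int.ModEq (p : ℤ) (s (p + 1)) a2 → N = 1) := by
  classical
  have hp : p.Prime := Fact.out
  -- divisibility consequences
  have hdD : ¬ (p:ℤ) ∣ (18 * a1 * a2 * a3 - 4 * a1 ^ 3 * a3 + a1 ^ 2 * a2 ^ 2
      - 4 * a2 ^ 3 - 27 * a3 ^ 2) := fun h => hpe ((h.mul_left 6).mul_right _)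
  have hdE : ¬ (p:ℤ) ∣ (a1 ^ 2 - 3 * a2) := fun h => hpe (h.mul_left _)
  have hDK : ((18 * a1 * a2 * a3 - 4 * a1 ^ 3 * a3 + a1 ^ 2 * a2 ^ 2
      - 4 * a2 ^ 3 - 27 * a3 ^ 2 : ℤ) : K) ≠ 0 := by
    rw [Ne, CharP.intCast_eq_zero_iff K p]; exact hdD
  have hAK : (a1 : K)^2 - 3 * (a2 : K) ≠ 0 := by
    intro h
    apply hdE
    rw [← CharP.intCast_eq_zero_iff K p]
    push_cast
    exact h
  -- the cubic and its roots
  set F : K[X] := X^3 + C (a1:K) * X^2 + C (a2:K) * X + C (a3:K) with hF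
  have hFm : F.Monic := by
    rw [hF]
    monicity!
  have hdeg : F.natDegree = 3 := by rw [hF]; compute_degree!
  have hcard : Multiset.card F.roots = 3 := by
    rw [← hdeg]
    exact (splits_iff_card_roots).mp (IsAlgClosed.splits F)
  obtain ⟨α, β, γ, hroots⟩ := Multiset.card_eq_three.mp hcard
  have hprod : F = (X - C α) * ((X - C β) * (X - C γ)) := by
    conv_lhs => rw [(IsAlgClosed.splits F).eq_prod_roots_of_monic hFm]
    rw [hroots]
    simp [Multiset.map_cons, Multiset.prod_cons, mul_assoc]
  have hev : ∀ x : K, x^3 + (a1:K)*x^2 + (a2:K)*x + (a3:K) = (x - α)*((x - β)*(x - γ)) := by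
    intro x
    have h := congrArg (Polynomial.eval x) hprod
    simpa [hF] using h
  -- Vieta
  have hexp : (X - C α) * ((X - C β) * (X - C γ)) =
      X^3 - C (α+β+γ) * X^2 + C (α*β+(β*γ+γ*α)) * X - C (α*(β*γ)) := by
    simp only [map_add, map_mul]
    ring
  have hFe := hprod.trans hexp
  have ha1 : (a1 : K) = -(α+β+γ) := by
    have hc := congrArg (fun q : K[X] => q.coeff 2) hFe
    simp only [hF, coeff_add, coeff_sub, coeff_C_mul, coeff_X_pow, coeff_C, coeff_X] at hc
    norm_num at hc
    linear_combination hc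
  have ha2 : (a2 : K) = α*β+β*γ+γ*α := by
    have hc := congrArg (fun q : K[X] => q.coeff 1) hFe
    simp only [hF, coeff_add, coeff_sub, coeff_C_mul, coeff_X_pow, coeff_C, coeff_X] at hc
    norm_num at hc
    linear_combination hc
  have ha3 : (a3 : K) = -(α*(β*γ)) := by
    have hc := congrArg (fun q : K[X] => q.coeff 0) hFe
    simp only [hF, coeff_add, coeff_sub, coeff_C_mul, coeff_X_pow, coeff_C, coeff_X] at hc
    norm_num at hc
    linear_combination hc
  have hE1 : α + β + γ = -(a1 : K) := by linear_combination ha1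
  have hE2 : α*β + β*γ + γ*α = (a2 : K) := ha2.symm
  -- distinctness
  have hdd : ((α-β)*((β-γ)*(γ-α)))^2 ≠ 0 := by
    have heq : ((α-β)*((β-γ)*(γ-α)))^2 = ((18 * a1 * a2 * a3 - 4 * a1 ^ 3 * a3
        + a1 ^ 2 * a2 ^ 2 - 4 * a2 ^ 3 - 27 * a3 ^ 2 : ℤ) : K) := by
      push_cast
      rw [ha1, ha2, ha3]
      ring
    rw [heq]
    exact hDK
  have hab : α ≠ β := fun h => hdd (by rw [h]; ring_nf)
  have hag : α ≠ γ := fun h => hdd (by rw [h]; ring_nf)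
  have hbg : β ≠ γ := fun h => hdd (by rw [h]; ring_nf)
  -- root equations
  have hfα : α^3 + (a1:K)*α^2 + (a2:K)*α + (a3:K) = 0 := by rw [hev α]; ring
  have hfβ : β^3 + (a1:K)*β^2 + (a2:K)*β + (a3:K) = 0 := by rw [hev β]; ring
  have hfγ : γ^3 + (a1:K)*γ^2 + (a2:K)*γ + (a3:K) = 0 := by rw [hev γ]; ring
  have hα3 : α^3 = -((a1:K)*α^2 + (a2:K)*α + (a3:K)) := by linear_combination hfα
  have hβ3 : β^3 = -((a1:K)*β^2 + (a2:K)*β + (a3:K)) := by linear_combination hfβ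
  have hγ3 : γ^3 = -((a1:K)*γ^2 + (a2:K)*γ + (a3:K)) := by linear_combination hfγ
  -- power sums
  have hs : ∀ n : ℕ, ((s n : ℤ) : K) = α^n + β^n + γ^n := by
    intro n
    induction n using Nat.strong_induction_on with
    | _ n ih =>
      rcases n with _ | _ | _ | m
      · rw [h0]; push_cast; ring
      · rw [h1]; push_cast; linear_combination -hE1
      · rw [h2]; push_cast; linear_combination ((a1:K) - (α+β+γ))*hE1 + 2*hE2
      · have hr : (s (m+3) : ℤ) = -(a1 * s (m+2) + a2 * s (m+1) + a3 * s m) := by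
          linear_combination hrec m
        calc ((s (m+3) : ℤ) : K)
            = -((a1:K) * ((s (m+2) : ℤ) : K) + (a2:K)*((s (m+1) : ℤ) : K)
                + (a3:K)*((s m : ℤ) : K)) := by rw [hr]; push_cast; ring
          _ = α^(m+3) + β^(m+3) + γ^(m+3) := by
              rw [ih (m+2) (by omega), ih (m+1) (by omega), ih m (by omega)]
              linear_combination (-(α^m)) * hα3 + (-(β^m)) * hβ3 + (-(γ^m)) * hγ3
  -- Frobenius
  have hfrob : ∀ x : K, (x^3 + (a1:K)*x^2 + (a2:K)*x + (a3:K))^p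
      = (x^p)^3 + (a1:K)*(x^p)^2 + (a2:K)*(x^p) + (a3:K) := by
    intro x
    have h : frobenius K p (x^3 + (a1:K)*x^2 + (a2:K)*x + (a3:K))
        = (frobenius K p x)^3 + (a1:K)*(frobenius K p x)^2 + (a2:K)*(frobenius K p x) + (a3:K) := by
      simp only [map_add, map_mul, map_pow, map_intCast]
    simpa only [frobenius_def] using h
  have hmem : ∀ x : K, x^3 + (a1:K)*x^2 + (a2:K)*x + (a3:K) = 0 →
      x^p = α ∨ x^p = β ∨ x^p = γ := by
    intro x hx
    have h0' : (x^p)^3 + (a1:K)*(x^p)^2 + (a2:K)*(x^p) + (a3:K) = 0 := by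
      rw [← hfrob x, hx, zero_pow hp.ne_zero]
    have hprod0 : (x^p - α)*((x^p - β)*(x^p - γ)) = 0 := by rw [← hev (x^p)]; exact h0'
    rcases mul_eq_zero.mp hprod0 with h | h
    · exact Or.inl (sub_eq_zero.mp h)
    · rcases mul_eq_zero.mp h with h | h
      · exact Or.inr (Or.inl (sub_eq_zero.mp h))
      · exact Or.inr (Or.inr (sub_eq_zero.mp h))
  have hαp := hmem α hfα
  have hβp := hmem β hfβ
  have hγp := hmem γ hfγ
  have hinj : ∀ x y : K, x^p = y^p → x = y := by
    intro x y h
    have h' : (x - y)^p = 0 := by rw [sub_pow_char, h, sub_self]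
    exact sub_eq_zero.mp ((pow_eq_zero_iff hp.ne_zero).mp h')
  -- fixed points are in the prime field
  have hfix : ∀ r : K, r ^ p = r → ∃ x : ZMod p, (ZMod.castHom (dvd_refl p) K) x = r := by
    have hplt : 1 < p := hp.one_lt
    have hPdeg : ((X:K[X])^p - X).natDegree = p := by
      rw [natDegree_sub_eq_left_of_natDegree_lt (by simpa [natDegree_X, natDegree_X_pow] using hplt),
        natDegree_X_pow]
    have hP0 : ((X:K[X])^p - X) ≠ 0 := by
      intro h
      rw [h] at hPdeg
      simp at hPdeg
      omega
    have hScard : (Finset.image (fun x : ZMod p => (ZMod.castHom (dvd_refl p) K) x) Finset.univ).card = p := by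
      rw [Finset.card_image_of_injective _ (ZMod.castHom (dvd_refl p) K).injective,
        Finset.card_univ, ZMod.card]
    have hsub : (Finset.image (fun x : ZMod p => (ZMod.castHom (dvd_refl p) K) x) Finset.univ)
        ⊆ ((X:K[X])^p - X).roots.toFinset := by
      intro r hr
      rw [Finset.mem_image] at hr
      obtain ⟨x, -, rfl⟩ := hr
      rw [Multiset.mem_toFinset, mem_roots hP0]
      simp only [IsRoot, eval_sub, eval_pow, eval_X]
      rw [← map_pow, ZMod.pow_card, sub_self]
    have hle : ((X:K[X])^p - X).roots.toFinset.card ≤ p :=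
      le_trans (Multiset.toFinset_card_le _) ((card_roots' _).trans_eq hPdeg)
    have hSeq : (Finset.image (fun x : ZMod p => (ZMod.castHom (dvd_refl p) K) x) Finset.univ)
        = ((X:K[X])^p - X).roots.toFinset :=
      Finset.eq_of_subset_of_card_le hsub (by rw [hScard]; exact hle)
    intro r hr
    have hrmem : r ∈ ((X:K[X])^p - X).roots.toFinset := by
      rw [Multiset.mem_toFinset, mem_roots hP0]
      simp [IsRoot, hr]
    rw [← hSeq, Finset.mem_image] at hrmem
    obtain ⟨x, -, hx⟩ := hrmem
    exact ⟨x, hx⟩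
  -- N equals the number of Frobenius-fixed roots
  have hNT : N = (({α, β, γ} : Finset K).filter (fun r => r ^ p = r)).card := by
    rw [hN]
    apply Finset.card_bij (fun (x : ZMod p) _ => (ZMod.castHom (dvd_refl p) K) x)
    · intro x hx
      have hx' := (Finset.mem_filter.mp hx).2
      have hxK : ((ZMod.castHom (dvd_refl p) K) x)^3 + (a1:K)*((ZMod.castHom (dvd_refl p) K) x)^2
          + (a2:K)*((ZMod.castHom (dvd_refl p) K) x) + (a3:K) = 0 := by
        have h := congrArg (ZMod.castHom (dvd_refl p) K) hx'
        simpa [map_add, map_mul, map_pow, map_intCast] using h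
      refine Finset.mem_filter.mpr ⟨?_, ?_⟩
      · have hp0 : ((ZMod.castHom (dvd_refl p) K) x - α) *
            (((ZMod.castHom (dvd_refl p) K) x - β) * ((ZMod.castHom (dvd_refl p) K) x - γ)) = 0 := by
          rw [← hev]; exact hxK
        simp only [Finset.mem_insert, Finset.mem_singleton]
        rcases mul_eq_zero.mp hp0 with h | h
        · exact Or.inl (sub_eq_zero.mp h)
        · rcases mul_eq_zero.mp h with h | h
          · exact Or.inr (Or.inl (sub_eq_zero.mp h))
          · exact Or.inr (Or.inr (sub_eq_zero.mp h))
      · rw [← map_pow, ZMod.pow_card]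
    · intro x _ y _ hxy
      exact (ZMod.castHom (dvd_refl p) K).injective hxy
    · intro r hr
      obtain ⟨hrT, hrfix⟩ := Finset.mem_filter.mp hr
      obtain ⟨x, hx⟩ := hfix r hrfix
      refine ⟨x, ?_, hx⟩
      refine Finset.mem_filter.mpr ⟨Finset.mem_univ x, ?_⟩
      apply (ZMod.castHom (dvd_refl p) K).injective
      rw [map_zero, map_add, map_add, map_add, map_mul, map_mul, map_pow, map_pow,
        map_intCast, map_intCast, map_intCast, hx]
      simp only [Finset.mem_insert, Finset.mem_singleton] at hrT
      rcases hrT with rfl | rfl | rfl <;> (rw [hev]; ring)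
  have hsp1 : ((s (p+1) : ℤ) : K) = α^p * α + β^p * β + γ^p * γ := by
    rw [hs (p+1)]; ring
  rcases hαp with hh1|hh1|hh1 <;> rcases hβp with hh2|hh2|hh2 <;> rcases hγp with hh3|hh3|hh3
  all_goals try exact absurd (hinj α β (hh1.trans hh2.symm)) hab
  all_goals try exact absurd (hinj α γ (hh1.trans hh3.symm)) hag
  all_goals try exact absurd (hinj β γ (hh2.trans hh3.symm)) hbg
  -- six bijective cases remain
  · -- identity
    have hNv : N = 3 := by
      rw [hNT]; exact fcard3 _ hab hag hbg hh1 hh2 hh3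
    exact aux3 p a1 a2 (s (p+1)) N α β γ hE1 hE2 hAK hNv
      (by rw [hsp1, hh1, hh2, hh3]; ring)
  · -- α fixed, β ↔ γ
    have hNv : N = 1 := by
      rw [hNT]
      exact fcard1 _ hh1 (fun h => hbg (h.symm.trans hh2)) (fun h => hbg (h.symm.trans hh3).symm)
    exact aux1 p a1 a2 (s (p+1)) N α β γ hE1 hE2 hab hag hbg hNv
      (by rw [hsp1, hh1, hh2, hh3]; ring)
  · -- γ fixed, α ↔ β
    have hNv : N = 1 := by
      rw [hNT]
      exact fcard1' _ (fun h => hab (h.symm.trans hh1)) (fun h => hab (h.symm.trans hh2).symm) hh3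
    exact aux1 p a1 a2 (s (p+1)) N γ α β (by linear_combination hE1) (by linear_combination hE2)
      hag.symm hbg.symm hab hNv (by rw [hsp1, hh1, hh2, hh3]; ring)
  · -- 3-cycle α→β→γ→α
    have hNv : N = 0 := by
      rw [hNT]
      exact fcard0 _ (fun h => hab (h.symm.trans hh1)) (fun h => hbg (h.symm.trans hh2))
        (fun h => hag (h.symm.trans hh3).symm)
    exact aux0 p a1 a2 (s (p+1)) N α β γ hE1 hE2 hAK hNv
      (by rw [hsp1, hh1, hh2, hh3]; ring)
  · -- 3-cycle α→γ→β→α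
    have hNv : N = 0 := by
      rw [hNT]
      exact fcard0 _ (fun h => hag (h.symm.trans hh1)) (fun h => hab (h.symm.trans hh2).symm)
        (fun h => hbg (h.symm.trans hh3).symm)
    exact aux0 p a1 a2 (s (p+1)) N α β γ hE1 hE2 hAK hNv
      (by rw [hsp1, hh1, hh2, hh3]; ring)
  · -- β fixed, α ↔ γ
    have hNv : N = 1 := by
      rw [hNT]
      exact fcard1'' _ (fun h => hag (h.symm.trans hh1)) hh2 (fun h => hag (h.symm.trans hh3).symm)
    exact aux1 p a1 a2 (s (p+1)) N β α γ (by linear_combination hE1) (by linear_combination hE2)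
      hab.symm hbg hag hNv (by rw [hsp1, hh1, hh2, hh3]; ring)

theorem sun_power_sums (a1 a2 a3 : ℤ) (s : ℕ → ℤ)
    (h0 : s 0 = 3) (h1 : s 1 = -a1) (h2 : s 2 = a1 ^ 2 - 2 * a2)
    (hrec : ∀ n, s (n + 3) + a1 * s (n + 2) + a2 * s (n + 1) + a3 * s n = 0)
    (p : ℕ) [Fact p.Prime]
    (hpe : ¬ ((p : ℤ) ∣ 6 * (18 * a1 * a2 * a3 - 4 * a1 ^ 3 * a3 + a1 ^ 2 * a2 ^ 2
      - 4 * a2 ^ 3 - 27 * a3 ^ 2) * (a1 ^ 2 - 3 * a2))) :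
    let N := (Finset.univ.filter
      (fun x : ZMod p => x ^ 3 + (a1 : ZMod p) * x ^ 2 + (a2 : ZMod p) * x + (a3 : ZMod p) = 0)).card
    (N = 3 ↔ Int.ModEq (p : ℤ) (s (p + 1)) (a1 ^ 2 - 2 * a2)) ∧
    (N = 0 ↔ Int.ModEq (p : ℤ) (s (p + 1)) a2) ∧
    (¬ Int.ModEq (p : ℤ) (s (p + 1)) (a1 ^ 2 - 2 * a2) →
      ¬ Int.ModEq (p : ℤ) (s (p + 1)) a2 → N = 1) := by
  intro N
  exact sun_aux p (AlgebraicClosure (ZMod p)) a1 a2 a3 s h0 h1 h2 hrec hpe N rfl
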